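/- Let E be a real inner product space, f : E → ℝ convex and differentiable with gradient ∇f L-Lipschitz continuous for some L > 0, and suppose the set Ω of minimizers of f is nonempty, with minimum value f*. Fix ᾱ ∈ (0, 1/L] and define the gradient descent iterates x_{k+1} = x_k − ᾱ ∇f(x_k) from any x_0 ∈ E. Then k·(f(x_k) − f*) → 0 as k → ∞; that is, f(x_k) − f* = o(1/k). -/

import Mathlib

open RealInnerProductSpace

/-- Gradient inequality for a convex function. -/
lemma convex_grad_ineq {E : Type*} [NormedAddCommGroup E] [InnerProductSpace ℝ E]
    (f : E → ℝ) (f' : E → E)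
    (hconv : ConvexOn ℝ Set.univ f)
    (hderiv : ∀ x, HasFDerivAt f (innerSL ℝ (f' x)) x) (x y : E) :
    f x + ⟪f' x, y - x⟫ ≤ f y := by
  set v := y - x with hv
  set φ : ℝ → ℝ := fun t => f (x + t • v) with hφ
  have hγ : ∀ t : ℝ, HasDerivAt (fun s : ℝ => x + s • v) v t := by
    intro t
    simpa using ((hasDerivAt_id t).smul_const v).const_add x
  have hφd : ∀ t : ℝ, HasDerivAt φ ⟪f' (x + t • v), v⟫ t := by
    intro t
    simpa [Function.comp_def] using (hderiv (x + t • v)).comp_hasDerivAt t (hγ t)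
  have hφconv : ConvexOn ℝ Set.univ φ := by
    have h := hconv.comp_affineMap (AffineMap.lineMap x y)
    have : φ = f ∘ (AffineMap.lineMap x y : ℝ →ᵃ[ℝ] E) := by
      funext t
      simp [hφ, AffineMap.lineMap_apply, hv, add_comm]
    rw [this]
    simpa using h
  have hslope := hφconv.le_slope_of_hasDerivAt (Set.mem_univ (0:ℝ)) (Set.mem_univ (1:ℝ))
    one_pos (by simpa using hφd 0)
  rw [slope_def_field] at hslope
  have h0 : φ 0 = f x := by simp [hφ]
  have h1 : φ 1 = f y := by simp [hφ, hv]
  rw [h0, h1] at hslope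
  have : ⟪f' x, v⟫ ≤ f y - f x := by simpa using hslope
  linarith

/-- Descent lemma for a function with `L`-Lipschitz gradient. -/
lemma descent_lemma {E : Type*} [NormedAddCommGroup E] [InnerProductSpace ℝ E]
    (f : E → ℝ) (f' : E → E) (L : ℝ) (hL : 0 ≤ L)
    (hderiv : ∀ x, HasFDerivAt f (innerSL ℝ (f' x)) x)
    (hlip : ∀ x y, ‖f' x - f' y‖ ≤ L * ‖x - y‖) (x y : E) :
    f y ≤ f x + ⟪f' x, y - x⟫ + L / 2 * ‖y - x‖ ^ 2 := by
  set v := y - x with hv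
  set c : ℝ := ⟪f' x, v⟫ with hc
  set K : ℝ := L * ‖v‖ ^ 2 / 2 with hK
  set h : ℝ → ℝ := fun t => f (x + t • v) - c * t - K * t ^ 2 with hh
  have hγ : ∀ t : ℝ, HasDerivAt (fun s : ℝ => x + s • v) v t := by
    intro t
    simpa using ((hasDerivAt_id t).smul_const v).const_add x
  have hφd : ∀ t : ℝ, HasDerivAt (fun t : ℝ => f (x + t • v)) ⟪f' (x + t • v), v⟫ t := by
    intro t
    simpa [Function.comp_def] using (hderiv (x + t • v)).comp_hasDerivAt t (hγ t)
  have hhd : ∀ t : ℝ, HasDerivAt h (⟪f' (x + t • v), v⟫ - c - K * (2 * t)) t := by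
    intro t
    have h1 : HasDerivAt (fun t : ℝ => c * t) c t := by
      simpa using (hasDerivAt_id t).const_mul c
    have h2 : HasDerivAt (fun t : ℝ => K * t ^ 2) (K * (2 * t)) t := by
      simpa using (hasDerivAt_pow 2 t).const_mul K
    exact ((hφd t).sub h1).sub h2
  have hanti : AntitoneOn h (Set.Icc (0:ℝ) 1) := by
    apply antitoneOn_of_deriv_nonpos (convex_Icc 0 1)
    · exact fun t _ => ((hhd t).continuousAt).continuousWithinAt
    · intro t _
      exact ((hhd t).differentiableAt).differentiableWithinAt
    · intro t ht
      rw [interior_Icc] at ht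
      rw [(hhd t).deriv]
      have hb : ⟪f' (x + t • v) - f' x, v⟫ ≤ L * t * ‖v‖ ^ 2 := by
        calc ⟪f' (x + t • v) - f' x, v⟫ ≤ ‖f' (x + t • v) - f' x‖ * ‖v‖ :=
              real_inner_le_norm _ _
          _ ≤ (L * ‖x + t • v - x‖) * ‖v‖ := by
              have := hlip (x + t • v) x
              nlinarith [norm_nonneg v]
          _ = L * t * ‖v‖ ^ 2 := by
              rw [add_sub_cancel_left, norm_smul]
              simp [abs_of_pos ht.1]
              ring
      have hsplit : ⟪f' (x + t • v) - f' x, v⟫ = ⟪f' (x + t • v), v⟫ - c := by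
        rw [hc, inner_sub_left]
      rw [hK] at *
      nlinarith [hb, hsplit]
  have h10 : h 1 ≤ h 0 := hanti (Set.left_mem_Icc.2 zero_le_one)
    (Set.right_mem_Icc.2 zero_le_one) zero_le_one
  have e1 : h 1 = f y - c - K := by simp [hh, hv]
  have e0 : h 0 = f x := by simp [hh]
  rw [e1, e0] at h10
  rw [hc, hK] at h10
  linarith

/-- An antitone nonnegative summable sequence satisfies `n * aₙ → 0`. -/
lemma aux_tendsto (δ : ℕ → ℝ) (h0 : ∀ n, 0 ≤ δ n) (hanti : Antitone δ)
    (hsum : Summable δ) :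
    Filter.Tendsto (fun n : ℕ => (n : ℝ) * δ n) Filter.atTop (nhds 0) := by
  rw [Metric.tendsto_atTop]
  intro ε hε
  have htail : Filter.Tendsto (fun N : ℕ => ∑' k, δ (k + N)) Filter.atTop (nhds 0) :=
    tendsto_sum_nat_add δ
  obtain ⟨N, hN⟩ : ∃ N : ℕ, ∑' k, δ (k + N) < ε / 2 := by
    have := (htail.eventually (gt_mem_nhds (by positivity : (0:ℝ) < ε/2))).exists
    exact this
  refine ⟨2 * N + 1, fun n hn => ?_⟩
  have hNn : N ≤ n + 1 := by omega
  have key : ((n + 1 - N : ℕ) : ℝ) * δ n ≤ ∑ k ∈ Finset.range (n + 1 - N), δ (k + N) := by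
    have h := Finset.card_nsmul_le_sum (Finset.range (n + 1 - N)) (fun k => δ (k + N)) (δ n)
      (fun k hk => hanti (by rw [Finset.mem_range] at hk; omega))
    simpa [nsmul_eq_mul] using h
  have key2 : ∑ k ∈ Finset.range (n + 1 - N), δ (k + N) ≤ ∑' k, δ (k + N) :=
    Summable.sum_le_tsum _ (fun k _ => h0 _) ((summable_nat_add_iff N).2 hsum)
  have hcast : ((n + 1 - N : ℕ) : ℝ) = (n : ℝ) + 1 - (N : ℝ) := by
    push_cast [Nat.cast_sub hNn]
    ring
  rw [hcast] at key
  have hn2 : (n : ℝ) ≤ 2 * ((n : ℝ) + 1 - N) := by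
    have : (2 * N + 1 : ℝ) ≤ n := by exact_mod_cast hn
    linarith
  have hδn := h0 n
  rw [Real.dist_eq, sub_zero, abs_of_nonneg (by positivity)]
  nlinarith [key, key2, hN]

/-- For `f` convex with `L`-Lipschitz gradient on a real inner
product space, gradient descent with fixed step `ᾱ ∈ (0, 1/L]` satisfies
`f(x_k) − f* = o(1/k)`. -/
theorem gradient_descent_o_one_div_k
    {E : Type*} [NormedAddCommGroup E] [InnerProductSpace ℝ E]
    (f : E → ℝ) (f' : E → E) (L : ℝ) (hL : 0 < L)
    (hconv : ConvexOn ℝ Set.univ f)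
    (hderiv : ∀ x, HasFDerivAt f (innerSL ℝ (f' x)) x)
    (hlip : ∀ x y, ‖f' x - f' y‖ ≤ L * ‖x - y‖)
    (xstar : E) (hxstar : ∀ y, f xstar ≤ f y)
    (α : ℝ) (hα0 : 0 < α) (hαL : α ≤ 1 / L)
    (x : ℕ → E) (hx : ∀ k, x (k + 1) = x k - α • f' (x k)) :
    Filter.Tendsto (fun k : ℕ => (k : ℝ) * (f (x k) - f xstar))
      Filter.atTop (nhds 0) := by
  set δ : ℕ → ℝ := fun k => f (x k) - f xstar with hδ
  have hδ0 : ∀ k, 0 ≤ δ k := fun k => sub_nonneg.2 (hxstar _)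
  show Filter.Tendsto (fun k : ℕ => (k : ℝ) * δ k) Filter.atTop (nhds 0)
  clear_value δ
  have hLα : α * L ≤ 1 := (le_div_iff₀ hL).mp hαL
  -- descent step
  have hdesc : ∀ k, δ (k + 1) ≤ δ k - α / 2 * ‖f' (x k)‖ ^ 2 := by
    intro k
    have hdl := descent_lemma f f' L hL.le hderiv hlip (x k) (x (k + 1))
    have hsub : x (k + 1) - x k = -(α • f' (x k)) := by rw [hx k]; abel
    rw [hsub] at hdl
    have hi : ⟪f' (x k), -(α • f' (x k))⟫ = -(α * ‖f' (x k)‖ ^ 2) := by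
      rw [inner_neg_right, real_inner_smul_right, real_inner_self_eq_norm_sq]
    have hn : ‖-(α • f' (x k))‖ ^ 2 = α ^ 2 * ‖f' (x k)‖ ^ 2 := by
      rw [norm_neg, norm_smul, Real.norm_eq_abs, abs_of_pos hα0]
      ring
    rw [hi, hn] at hdl
    have hg2 : (0:ℝ) ≤ ‖f' (x k)‖ ^ 2 := sq_nonneg _
    simp only [hδ]
    nlinarith
  have hanti : Antitone δ := antitone_nat_of_succ_le fun k => by
    nlinarith [hdesc k, mul_nonneg (by linarith : (0:ℝ) ≤ α / 2) (sq_nonneg ‖f' (x k)‖)]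
  -- distance decrease
  have hdist : ∀ k, ‖x (k + 1) - xstar‖ ^ 2 ≤ ‖x k - xstar‖ ^ 2 - 2 * α * δ (k + 1) := by
    intro k
    have hexp : x (k + 1) - xstar = (x k - xstar) - α • f' (x k) := by rw [hx k]; abel
    have hns := norm_sub_sq_real (x k - xstar) (α • f' (x k))
    have hi : ⟪x k - xstar, α • f' (x k)⟫ = α * ⟪f' (x k), x k - xstar⟫ := by
      rw [real_inner_smul_right, real_inner_comm]
    have hn : ‖α • f' (x k)‖ ^ 2 = α ^ 2 * ‖f' (x k)‖ ^ 2 := by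
      rw [norm_smul, Real.norm_eq_abs, abs_of_pos hα0]
      ring
    have hcg := convex_grad_ineq f f' hconv hderiv (x k) xstar
    have hneg : ⟪f' (x k), xstar - x k⟫ = -⟪f' (x k), x k - xstar⟫ := by
      rw [← inner_neg_right]
      congr 1
      abel
    rw [hneg] at hcg
    -- ⟪f' (x k), x k - xstar⟫ ≥ δ k
    have hlow : δ k ≤ ⟪f' (x k), x k - xstar⟫ := by
      simp only [hδ]; linarith
    have hd := hdesc k
    have h1 : 2 * α * δ k ≤ 2 * α * ⟪f' (x k), x k - xstar⟫ :=
      mul_le_mul_of_nonneg_left hlow (by linarith)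
    have h2 : α ^ 2 * ‖f' (x k)‖ ^ 2 ≤ 2 * α * (δ k - δ (k + 1)) := by
      nlinarith [mul_le_mul_of_nonneg_left hd hα0.le]
    rw [hexp, hns, hi, hn]
    linarith
  -- telescoping
  have htel : ∀ n, 2 * α * (∑ i ∈ Finset.range n, δ (i + 1)) + ‖x n - xstar‖ ^ 2
      ≤ ‖x 0 - xstar‖ ^ 2 := by
    intro n
    induction n with
    | zero => simp
    | succ m ih =>
      rw [Finset.sum_range_succ]
      have := hdist m
      nlinarith
  have hsumb : ∀ n, ∑ i ∈ Finset.range n, δ i ≤ δ 0 + ‖x 0 - xstar‖ ^ 2 / (2 * α) := by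
    intro n
    cases n with
    | zero =>
      simp only [Finset.range_zero, Finset.sum_empty]
      have h1 := hδ0 0
      have h2 : (0:ℝ) ≤ ‖x 0 - xstar‖ ^ 2 / (2 * α) := by positivity
      linarith
    | succ m =>
      rw [Finset.sum_range_succ']
      have h1 := htel m
      have h2 : (0:ℝ) ≤ ‖x m - xstar‖ ^ 2 := sq_nonneg _
      have h3 : (0:ℝ) < 2 * α := by linarith
      have : ∑ i ∈ Finset.range m, δ (i + 1) ≤ ‖x 0 - xstar‖ ^ 2 / (2 * α) := by
        rw [le_div_iff₀ h3]
        nlinarith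
      linarith
  have hsumm : Summable δ := summable_of_sum_range_le hδ0 hsumb
  exact aux_tendsto δ hδ0 hanti hsumm
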